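/- Let f₀, f₁ ∈ PL₀(I) satisfy the relations [f₀f₁⁻¹, f₀⁻¹f₁f₀] = 1 and [f₀f₁⁻¹, f₀⁻²f₁f₀²] = 1. If the open interval A is an orbital of both f₀ and f₁, then f₀ and f₁ commute when restricted to A (i.e., f₀f₁ and f₁f₀ agree on A). -/

import Mathlib

/-- The support of a permutation `f` of `ℝ` : the set of points moved by `f`. -/
def Supp (f : Equiv.Perm ℝ) : Set ℝ := {x : ℝ | f x ≠ x}

/-- `IsPL0 f` says that `f` is (the extension by the identity on `ℝ \ [0,1]` of) a
piecewise-linear orientation-preserving homeomorphism of the unit interval `[0,1]`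
with only finitely many breakpoints; this represents membership in `PL₀(I)`.
The finite set `B` collects the possible points of non-differentiability: away from
`B` the map is locally affine. -/
def IsPL0 (f : Equiv.Perm ℝ) : Prop :=
  StrictMono ⇑f ∧ (∀ x : ℝ, x ≤ 0 → f x = x) ∧ (∀ x : ℝ, 1 ≤ x → f x = x) ∧
    ∃ B : Finset ℝ, ∀ x : ℝ, x ∉ B → ∃ s t : ℝ, ∀ᶠ y in nhds x, f y = s * y + t

/-- `IsOrbital f a b` : the open interval `(a,b)` is an orbital of `f`, i.e. a
connected component of `Supp f` (an open interval contained in the support whose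
endpoints are fixed by `f`). -/
def IsOrbital (f : Equiv.Perm ℝ) (a b : ℝ) : Prop :=
  a < b ∧ Set.Ioo a b ⊆ Supp f ∧ f a = a ∧ f b = b

open scoped commutatorElement

/-- The two defining relations `[f₀f₁⁻¹, f₁^{f₀}] = 1` and `[f₀f₁⁻¹, f₁^{f₀²}] = 1`
of Thompson's group `F`, for the pair `(f₀, f₁)`.  The paper composes in word order
(functions act on the right), so the paper's word `f₀f₁⁻¹` is the group element
`f₁⁻¹ * f₀` in Mathlib's left-action convention, and the conjugate
`f₁^{f₀} = f₀⁻¹f₁f₀` is the element `f₀ * f₁ * f₀⁻¹`.  Recall `⁅a,b⁆ = 1 ↔ a*b = b*a`. -/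
def ThompsonRel (f₀ f₁ : Equiv.Perm ℝ) : Prop :=
  ⁅f₁⁻¹ * f₀, f₀ * f₁ * f₀⁻¹⁆ = 1 ∧ ⁅f₁⁻¹ * f₀, f₀ ^ 2 * f₁ * (f₀ ^ 2)⁻¹⁆ = 1

open Filter Set Topology

theorem Equiv.Perm.apply_inv_self {α : Type*} (f : Equiv.Perm α) (x : α) : f (f⁻¹ x) = x :=
  Equiv.apply_symm_apply f x

theorem Equiv.Perm.inv_apply_self {α : Type*} (f : Equiv.Perm α) (x : α) : f⁻¹ (f x) = x :=
  Equiv.symm_apply_apply f x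

section CommuteAux

/-- affine map fixing `a` with slope `s` -/
def aff (a s : ℝ) : ℝ → ℝ := fun x => a + s * (x - a)

lemma perm_symm_strictMono (f : Equiv.Perm ℝ) (hf : StrictMono ⇑f) : StrictMono ⇑f⁻¹ := by
  intro u v h
  rw [← Equiv.Perm.apply_inv_self f u, ← Equiv.Perm.apply_inv_self f v] at h
  exact hf.lt_iff_lt.mp h

lemma perm_continuous (f : Equiv.Perm ℝ) (hf : StrictMono ⇑f) : Continuous ⇑f :=
  (StrictMono.orderIsoOfSurjective ⇑f hf f.surjective).continuous

lemma aff_tendsto {a s : ℝ} (hs : 0 < s) : Tendsto (aff a s) (𝓝[>] a) (𝓝[>] a) := by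
  apply tendsto_nhdsWithin_of_tendsto_nhds_of_eventually_within
  · have hc : Continuous (aff a s) := by
      unfold aff; continuity
    have h0 : Tendsto (aff a s) (𝓝 a) (𝓝 a) := by
      have := hc.tendsto a
      simpa [aff] using this
    exact h0.mono_left nhdsWithin_le_nhds
  · filter_upwards [self_mem_nhdsWithin] with x hx
    have : (0:ℝ) < s * (x - a) := mul_pos hs (by simpa using sub_pos.mpr (show a < x from hx))
    simp only [aff, Set.mem_Ioi]; linarith

lemma germ_comp {f g : Equiv.Perm ℝ} {a p q : ℝ} (hq : 0 < q)
    (hf : ⇑f =ᶠ[𝓝[>] a] aff a p) (hg : ⇑g =ᶠ[𝓝[>] a] aff a q) :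
    ⇑(f * g) =ᶠ[𝓝[>] a] aff a (p * q) := by
  have h1 : ⇑f ∘ aff a q =ᶠ[𝓝[>] a] aff a p ∘ aff a q := hf.comp_tendsto (aff_tendsto hq)
  have h2 : ⇑(f * g) =ᶠ[𝓝[>] a] ⇑f ∘ aff a q := by
    filter_upwards [hg] with x hx
    simp [Equiv.Perm.mul_apply, Function.comp, hx]
  refine h2.trans (h1.trans ?_)
  apply Filter.EventuallyEq.of_eq
  funext x; simp [aff, Function.comp]; ring

lemma germ_inv {f : Equiv.Perm ℝ} {a p : ℝ} (hp : 0 < p)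
    (hf : ⇑f =ᶠ[𝓝[>] a] aff a p) : ⇑f⁻¹ =ᶠ[𝓝[>] a] aff a p⁻¹ := by
  have h1 : ⇑f ∘ aff a p⁻¹ =ᶠ[𝓝[>] a] aff a p ∘ aff a p⁻¹ :=
    hf.comp_tendsto (aff_tendsto (inv_pos.mpr hp))
  have h2 : aff a p ∘ aff a p⁻¹ = id := by
    funext x; simp [aff, Function.comp]
    field_simp
    ring
  rw [h2] at h1
  filter_upwards [h1] with x hx
  have : f (aff a p⁻¹ x) = x := hx
  calc f⁻¹ x = f⁻¹ (f (aff a p⁻¹ x)) := by rw [this]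
    _ = aff a p⁻¹ x := Equiv.Perm.inv_apply_self f _

lemma affine_coeff_eq {s t s' t' x : ℝ}
    (h : ∀ᶠ y in 𝓝 x, s * y + t = s' * y + t') : s = s' ∧ t = t' := by
  obtain ⟨ε, hε, hb⟩ := Metric.eventually_nhds_iff.mp h
  have h1 : s * x + t = s' * x + t' := hb (by simp [hε])
  have h2 : s * (x + ε/2) + t = s' * (x + ε/2) + t' := by
    apply hb
    rw [Real.dist_eq, show x + ε/2 - x = ε/2 by ring, abs_of_pos (by linarith)]
    linarith
  have hs : s = s' := by
    have h3 : s * (ε/2) = s' * (ε/2) := by linarith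
    exact mul_right_cancel₀ (by positivity) h3
  exact ⟨hs, by rw [hs] at h1; linarith⟩

lemma affine_of_locally_affine {f : ℝ → ℝ} {S : Set ℝ} (hS : IsPreconnected S)
    (h : ∀ x ∈ S, ∃ s t : ℝ, ∀ᶠ y in 𝓝 x, f y = s * y + t)
    {x₀ : ℝ} (hx₀ : x₀ ∈ S) : ∃ s t : ℝ, ∀ x ∈ S, f x = s * x + t := by
  obtain ⟨s, t, hst⟩ := h x₀ hx₀
  set u : Set ℝ := {x | ∀ᶠ y in 𝓝 x, f y = s * y + t} with hu_def
  set v : Set ℝ := {x | ∃ s' t' : ℝ, (∀ᶠ y in 𝓝 x, f y = s' * y + t') ∧ x ∉ u} with hv_def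
  have hu_open : IsOpen u := by
    rw [isOpen_iff_mem_nhds]
    intro x hx
    exact eventually_eventually_nhds.mpr hx
  have hv_open : IsOpen v := by
    rw [isOpen_iff_mem_nhds]
    intro x ⟨s', t', hx, hxu⟩
    have hst' : ¬ (s = s' ∧ t = t') := by
      rintro ⟨rfl, rfl⟩; exact hxu hx
    filter_upwards [eventually_eventually_nhds.mpr hx] with y hy
    refine ⟨s', t', hy, fun hyu => ?_⟩
    have : ∀ᶠ z in 𝓝 y, s * z + t = s' * z + t' := by
      filter_upwards [hyu, hy] with z h1 h2; rw [← h1, ← h2]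
    exact hst' (affine_coeff_eq this)
  have hdisj : Disjoint u v := by
    rw [Set.disjoint_left]
    rintro x hxu ⟨s', t', _, hxu'⟩
    exact hxu' hxu
  have hsub : S ⊆ u ∪ v := by
    intro x hx
    obtain ⟨s', t', hx'⟩ := h x hx
    by_cases hxu : x ∈ u
    · exact Or.inl hxu
    · exact Or.inr ⟨s', t', hx', hxu⟩
  have := hS.subset_left_of_subset_union hu_open hv_open hdisj hsub ⟨x₀, hx₀, hst⟩
  exact ⟨s, t, fun x hx => (this hx).self_of_nhds⟩

/-- key germ extraction: a PL0 map fixing `a` is affine just to the right of `a`. -/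
lemma exists_germ (f : Equiv.Perm ℝ) (hf : IsPL0 f) {a : ℝ} (ha : f a = a) :
    ∃ s : ℝ, 0 < s ∧ ⇑f =ᶠ[𝓝[>] a] aff a s := by
  classical
  obtain ⟨hmono, -, -, B, hB⟩ := hf
  have hδ : ∃ δ : ℝ, 0 < δ ∧ ∀ x ∈ Ioo a (a + δ), x ∉ B := by
    by_cases hne : (B.filter (fun x => a < x)).Nonempty
    · refine ⟨(B.filter (fun x => a < x)).min' hne - a, ?_, ?_⟩
      · have h := (B.filter (fun x => a < x)).min'_mem hne
        rw [Finset.mem_filter] at h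
        linarith [h.2]
      · intro x hx hxB
        have hm : (B.filter (fun x => a < x)).min' hne ≤ x :=
          Finset.min'_le _ _ (Finset.mem_filter.mpr ⟨hxB, hx.1⟩)
        have := hx.2; linarith
    · exact ⟨1, one_pos, fun x hx hxB =>
        hne ⟨x, Finset.mem_filter.mpr ⟨hxB, hx.1⟩⟩⟩
  obtain ⟨δ, hδ0, hδB⟩ := hδ
  have hpre : IsPreconnected (Ioo a (a + δ)) := isPreconnected_Ioo
  have hmem : a + δ/2 ∈ Ioo a (a + δ) := by constructor <;> [linarith; linarith]
  obtain ⟨s, t, hst⟩ := affine_of_locally_affine hpre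
    (fun x hx => hB x (hδB x hx)) hmem
  -- s > 0 from strict monotonicity
  have hx1 : a + δ/4 ∈ Ioo a (a + δ) := by constructor <;> [linarith; linarith]
  have hlt : f (a + δ/4) < f (a + δ/2) := hmono (by linarith)
  rw [hst _ hx1, hst _ hmem] at hlt
  have hs : 0 < s := by nlinarith
  -- continuity gives t = a - s * a
  have hcont := perm_continuous f hmono
  have h1 : Tendsto ⇑f (𝓝[>] a) (𝓝 a) := by
    have := hcont.continuousAt (x := a)
    rw [ContinuousAt, ha] at this
    exact this.mono_left nhdsWithin_le_nhds
  have heq : ⇑f =ᶠ[𝓝[>] a] fun x => s * x + t := by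
    filter_upwards [Ioo_mem_nhdsGT_of_mem (⟨le_refl a, by linarith⟩ : a ∈ Ico a (a + δ))] with x hx
    exact hst x hx
  have h2 : Tendsto (fun x : ℝ => s * x + t) (𝓝[>] a) (𝓝 (s * a + t)) := by
    have : Continuous (fun x : ℝ => s * x + t) := by continuity
    exact this.continuousAt.mono_left nhdsWithin_le_nhds
  have hat : a = s * a + t := tendsto_nhds_unique (h1.congr' heq) h2
  refine ⟨s, hs, ?_⟩
  filter_upwards [heq] with x hx
  rw [hx, aff]; linarith



lemma maps_Ioo (f : Equiv.Perm ℝ) (hm : StrictMono ⇑f) {a b : ℝ}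
    (ha : f a = a) (hb : f b = b) : ∀ x ∈ Ioo a b, f x ∈ Ioo a b :=
  fun x hx => ⟨ha ▸ hm hx.1, hb ▸ hm hx.2⟩

lemma inv_fixed (f : Equiv.Perm ℝ) {a : ℝ} (ha : f a = a) : f⁻¹ a = a := by
  conv_lhs => rw [← ha]
  exact Equiv.Perm.inv_apply_self f a

lemma direction (f : Equiv.Perm ℝ) (hc : Continuous ⇑f) {a b : ℝ}
    (hsupp : ∀ x ∈ Ioo a b, f x ≠ x) :
    (∀ x ∈ Ioo a b, x < f x) ∨ (∀ x ∈ Ioo a b, f x < x) := by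
  by_contra hcon
  push_neg at hcon
  obtain ⟨⟨u, hu, hu'⟩, ⟨v, hv, hv'⟩⟩ := hcon
  have hu2 : f u < u := lt_of_le_of_ne hu' (hsupp u hu)
  have hv2 : v < f v := lt_of_le_of_ne hv' (Ne.symm (hsupp v hv))
  set F : ℝ → ℝ := fun x => f x - x with hF
  have hFc : Continuous F := hc.sub continuous_id
  have huv : u ≠ v := by
    rintro rfl; linarith
  have : ∃ w ∈ Ioo a b, F w = 0 := by
    rcases lt_or_gt_of_ne huv with h | h
    · have hsub := intermediate_value_Ioo h.le (hFc.continuousOn (s := Icc u v))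
      have h0 : (0:ℝ) ∈ Ioo (F u) (F v) := by
        constructor <;> (simp only [hF]; linarith)
      obtain ⟨w, hw, hw0⟩ := hsub h0
      exact ⟨w, ⟨lt_trans hu.1 hw.1, lt_trans hw.2 hv.2⟩, hw0⟩
    · have hsub := intermediate_value_Ioo' h.le (hFc.continuousOn (s := Icc v u))
      have h0 : (0:ℝ) ∈ Ioo (F u) (F v) := by
        constructor <;> (simp only [hF]; linarith)
      obtain ⟨w, hw, hw0⟩ := hsub h0
      exact ⟨w, ⟨lt_trans hv.1 hw.1, lt_trans hw.2 hu.2⟩, hw0⟩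
  obtain ⟨w, hw, hw0⟩ := this
  exact hsupp w hw (by simp only [hF] at hw0; linarith)



lemma iter_mem_Ioo (f : Equiv.Perm ℝ) (hm : StrictMono ⇑f) {a b : ℝ}
    (ha : f a = a) (hb : f b = b) {c : ℝ} (hc : c ∈ Ioo a b) :
    ∀ n : ℕ, (⇑f)^[n] c ∈ Ioo a b := by
  intro n
  induction n with
  | zero => exact hc
  | succ n ih => rw [Function.iterate_succ_apply']; exact maps_Ioo f hm ha hb _ ih

lemma orbit_reach (f : Equiv.Perm ℝ) (hm : StrictMono ⇑f) (hcont : Continuous ⇑f)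
    {a b c : ℝ} (ha : f a = a) (hb : f b = b)
    (hup : ∀ x ∈ Ioo a b, x < f x) (hc : c ∈ Ioo a b) :
    ∀ x ∈ Ioo a b, ∃ n : ℕ, x ≤ (⇑f)^[n] c := by
  intro x hx
  set u : ℕ → ℝ := fun n => (⇑f)^[n] c with hu
  have humem : ∀ n, u n ∈ Ioo a b := iter_mem_Ioo f hm ha hb hc
  have humono : Monotone u := by
    apply monotone_nat_of_le_succ
    intro n
    have : u n < f (u n) := hup _ (humem n)
    rw [hu]; simp only [Function.iterate_succ_apply']
    exact this.le
  have hbdd : BddAbove (Set.range u) := by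
    refine ⟨b, ?_⟩
    rintro y ⟨n, rfl⟩
    exact (humem n).2.le
  have htend : Tendsto u atTop (𝓝 (⨆ n, u n)) := tendsto_atTop_ciSup humono hbdd
  set L := ⨆ n, u n with hL
  have hLb : L ≤ b := ciSup_le fun n => (humem n).2.le
  have hcL : c ≤ L := le_ciSup hbdd 0
  have haL : a < L := lt_of_lt_of_le hc.1 hcL
  have hfL : f L = L := by
    have h1 : Tendsto (fun n => u (n + 1)) atTop (𝓝 L) :=
      htend.comp (tendsto_add_atTop_nat 1)
    have h2 : Tendsto (fun n => f (u n)) atTop (𝓝 (f L)) :=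
      (hcont.continuousAt.tendsto).comp htend
    have h3 : (fun n => u (n + 1)) = fun n => f (u n) := by
      funext n; rw [hu]; simp [Function.iterate_succ_apply']
    rw [h3] at h1
    exact tendsto_nhds_unique h2 h1
  have hLeqb : L = b := by
    by_contra hne
    have : L ∈ Ioo a b := ⟨haL, lt_of_le_of_ne hLb hne⟩
    exact absurd hfL (ne_of_gt (hup L this))
  have hxL : x < L := hLeqb ▸ hx.2
  obtain ⟨n, hn⟩ := (lt_ciSup_iff hbdd).mp hxL
  exact ⟨n, hn.le⟩

lemma eq_id_of_commute (f H : Equiv.Perm ℝ) (hm : StrictMono ⇑f) (hcont : Continuous ⇑f)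
    {a b c : ℝ} (ha : f a = a) (hb : f b = b)
    (hup : ∀ x ∈ Ioo a b, x < f x)
    (hcomm : ∀ x, H (f x) = f (H x)) (hc : c ∈ Ioo a b)
    (hH : ∀ x ∈ Ioo a c, H x = x) :
    ∀ x ∈ Ioo a b, H x = x := by
  intro x hx
  -- pick c₀ strictly inside (a, c)
  have hc0 : (a + c) / 2 ∈ Ioo a b := ⟨by linarith [hc.1], by linarith [hc.1, hc.2]⟩
  set c₀ := (a + c) / 2 with hc₀def
  obtain ⟨n, hn⟩ := orbit_reach f hm hcont ha hb hup hc0 x hx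
  set y := (⇑f⁻¹)^[n] x with hy
  have hinvm : StrictMono ⇑f⁻¹ := perm_symm_strictMono f hm
  have hLI : Function.LeftInverse ⇑f⁻¹ ⇑f := Equiv.Perm.inv_apply_self f
  have hLI' : Function.LeftInverse ⇑f ⇑f⁻¹ := Equiv.Perm.apply_inv_self f
  -- y ∈ Ioo a b
  have hymem : y ∈ Ioo a b := by
    rw [hy]
    have : ∀ m : ℕ, (⇑f⁻¹)^[m] x ∈ Ioo a b := by
      intro m
      induction m with
      | zero => exact hx
      | succ m ih =>
        rw [Function.iterate_succ_apply']
        exact maps_Ioo f⁻¹ hinvm (inv_fixed f ha) (inv_fixed f hb) _ ih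
    exact this n
  -- y ≤ c₀ < c
  have hyc : y ≤ c₀ := by
    have hmono_it : Monotone (⇑f⁻¹)^[n] := hinvm.monotone.iterate n
    have h2 := hmono_it hn
    rw [(hLI.iterate n) c₀] at h2
    exact h2
  have hyIoo : y ∈ Ioo a c := ⟨hymem.1, lt_of_le_of_lt hyc (by rw [hc₀def]; linarith [hc.1])⟩
  have hHy : H y = y := hH y hyIoo
  -- commute with iterates
  have hcommit : ∀ (m : ℕ) (z : ℝ), H ((⇑f)^[m] z) = (⇑f)^[m] (H z) := by
    intro m
    induction m with
    | zero => intro z; simp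
    | succ m ih =>
      intro z
      rw [Function.iterate_succ_apply', Function.iterate_succ_apply', hcomm, ih]
  have hfy : (⇑f)^[n] y = x := (hLI'.iterate n) x
  calc H x = H ((⇑f)^[n] y) := by rw [hfy]
    _ = (⇑f)^[n] (H y) := hcommit n y
    _ = (⇑f)^[n] y := by rw [hHy]
    _ = x := hfy


end CommuteAux

/-- If `f₀, f₁ ∈ PL₀(I)` satisfy the two standard relations of Thompson's group `F`
and the open interval `A = (a,b)` is an orbital of both `f₀` and `f₁`, then `f₀` and
`f₁` commute on `A`. -/
theorem commute_on_common_orbital (f₀ f₁ : Equiv.Perm ℝ)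
    (h₀ : IsPL0 f₀) (h₁ : IsPL0 f₁) (hrel : ThompsonRel f₀ f₁) (a b : ℝ)
    (horb₀ : IsOrbital f₀ a b) (horb₁ : IsOrbital f₁ a b) :
    ∀ x ∈ Set.Ioo a b, f₀ (f₁ x) = f₁ (f₀ x) := by
  obtain ⟨hab, hsupp₀, ha₀, hb₀⟩ := horb₀
  obtain ⟨-, hsupp₁, ha₁, hb₁⟩ := horb₁
  have hm₀ : StrictMono ⇑f₀ := h₀.1
  have hm₁ : StrictMono ⇑f₁ := h₁.1
  have hc₀ : Continuous ⇑f₀ := perm_continuous f₀ hm₀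
  have hc₁ : Continuous ⇑f₁ := perm_continuous f₁ hm₁
  obtain ⟨p, hp, hgp⟩ := exists_germ f₀ h₀ ha₀
  obtain ⟨q, hq, hgq⟩ := exists_germ f₁ h₁ ha₁
  have rel1 : (f₁⁻¹ * f₀) * (f₀ * f₁ * f₀⁻¹) = (f₀ * f₁ * f₀⁻¹) * (f₁⁻¹ * f₀) :=
    (commutatorElement_eq_one_iff_commute.mp hrel.1).eq
  have rel2 : (f₁⁻¹ * f₀) * (f₀ ^ 2 * f₁ * (f₀ ^ 2)⁻¹)
      = (f₀ ^ 2 * f₁ * (f₀ ^ 2)⁻¹) * (f₁⁻¹ * f₀) :=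
    (commutatorElement_eq_one_iff_commute.mp hrel.2).eq
  set g₁ : Equiv.Perm ℝ := f₀⁻¹ * f₁⁻¹ * f₀ * f₀ with hg1
  set g₂ : Equiv.Perm ℝ := f₀⁻¹ * g₁ * f₀ with hg2
  set H : Equiv.Perm ℝ := g₁ * g₂⁻¹ with hH
  -- g₁ and g₂ commute with f₁
  have hA : Commute g₁ f₁ := by
    show g₁ * f₁ = f₁ * g₁
    have e1 : g₁ * f₁ = f₀⁻¹ * ((f₁⁻¹ * f₀) * (f₀ * f₁ * f₀⁻¹)) * f₀ := by
      rw [hg1]; group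
    rw [e1, rel1, hg1]; group
  have hB : Commute g₂ f₁ := by
    show g₂ * f₁ = f₁ * g₂
    rw [sq] at rel2
    have e1 : g₂ * f₁ = f₀⁻¹ * f₀⁻¹ *
        ((f₁⁻¹ * f₀) * (f₀ * f₀ * f₁ * (f₀ * f₀)⁻¹)) * f₀ * f₀ := by
      rw [hg2, hg1]; group
    rw [e1, rel2, hg2, hg1]; group
  have hCommH : ∀ x : ℝ, H (f₁ x) = f₁ (H x) := by
    have hc : H * f₁ = f₁ * H := (hA.mul_left hB.inv_left).eq
    intro x
    have := congrArg (fun σ : Equiv.Perm ℝ => σ x) hc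
    simpa [Equiv.Perm.mul_apply] using this
  -- germ of H at a is trivial
  have hHid : ∀ᶠ x in 𝓝[>] a, H x = x := by
    have t0 : ⇑f₀⁻¹ =ᶠ[𝓝[>] a] aff a p⁻¹ := germ_inv hp hgp
    have t1 : ⇑f₁⁻¹ =ᶠ[𝓝[>] a] aff a q⁻¹ := germ_inv hq hgq
    have hpi : (0:ℝ) < p⁻¹ := inv_pos.mpr hp
    have hqi : (0:ℝ) < q⁻¹ := inv_pos.mpr hq
    have c1 := germ_comp hqi t0 t1
    have c2 := germ_comp hp c1 hgp
    have c3 : ⇑g₁ =ᶠ[𝓝[>] a] aff a (p⁻¹ * q⁻¹ * p * p) := germ_comp hp c2 hgp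
    have hs1 : (0:ℝ) < p⁻¹ * q⁻¹ * p * p := by positivity
    have c4 := germ_comp hs1 t0 c3
    have c5 : ⇑g₂ =ᶠ[𝓝[>] a] aff a (p⁻¹ * (p⁻¹ * q⁻¹ * p * p) * p) := germ_comp hp c4 hgp
    have hs2 : (0:ℝ) < p⁻¹ * (p⁻¹ * q⁻¹ * p * p) * p := by positivity
    have c6 := germ_inv hs2 c5
    have c7 : ⇑H =ᶠ[𝓝[>] a] aff a
        ((p⁻¹ * q⁻¹ * p * p) * (p⁻¹ * (p⁻¹ * q⁻¹ * p * p) * p)⁻¹) := by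
      have := germ_comp (inv_pos.mpr hs2) c3 c6
      exact this
    have hS : (p⁻¹ * q⁻¹ * p * p) * (p⁻¹ * (p⁻¹ * q⁻¹ * p * p) * p)⁻¹ = 1 := by
      field_simp
    filter_upwards [c7] with x hx
    rw [hx, hS]
    simp [aff]
  obtain ⟨u, hu, husub⟩ := mem_nhdsGT_iff_exists_Ioo_subset.mp hHid
  set c : ℝ := min u ((a + b) / 2) with hcdef
  have hcIoo : c ∈ Ioo a b := by
    constructor
    · exact lt_min hu (by linarith)
    · exact lt_of_le_of_lt (min_le_right _ _) (by linarith)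
  have hHonIooac : ∀ x ∈ Ioo a c, H x = x := by
    intro x hx
    exact husub ⟨hx.1, lt_of_lt_of_le hx.2 (min_le_left _ _)⟩
  -- H is the identity on all of (a,b)
  have hne : ∀ x ∈ Ioo a b, f₁ x ≠ x := fun x hx => hsupp₁ hx
  have hHonA : ∀ x ∈ Ioo a b, H x = x := by
    rcases direction f₁ hc₁ hne with hupp | hdown
    · exact eq_id_of_commute f₁ H hm₁ hc₁ ha₁ hb₁ hupp hCommH hcIoo hHonIooac
    · have hm' : StrictMono ⇑f₁⁻¹ := perm_symm_strictMono f₁ hm₁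
      have hc' : Continuous ⇑f₁⁻¹ := perm_continuous f₁⁻¹ hm'
      have hup' : ∀ x ∈ Ioo a b, x < f₁⁻¹ x := by
        intro x hx
        have := hm' (hdown x hx)
        rwa [Equiv.Perm.inv_apply_self f₁] at this
      have hcomm' : ∀ y : ℝ, H (f₁⁻¹ y) = f₁⁻¹ (H y) := by
        intro y
        have h2 := hCommH (f₁⁻¹ y)
        rw [Equiv.Perm.apply_inv_self f₁] at h2
        rw [h2, Equiv.Perm.inv_apply_self f₁]
      exact eq_id_of_commute f₁⁻¹ H hm' hc' (inv_fixed f₁ ha₁) (inv_fixed f₁ hb₁)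
        hup' hcomm' hcIoo hHonIooac
  -- membership maps
  have M0 := maps_Ioo f₀ hm₀ ha₀ hb₀
  have M0' := maps_Ioo f₀⁻¹ (perm_symm_strictMono f₀ hm₀) (inv_fixed f₀ ha₀) (inv_fixed f₀ hb₀)
  have M1 := maps_Ioo f₁ hm₁ ha₁ hb₁
  have M1' := maps_Ioo f₁⁻¹ (perm_symm_strictMono f₁ hm₁) (inv_fixed f₁ ha₁) (inv_fixed f₁ hb₁)
  -- step 3: g₁ = g₂ on A
  have hgeq : ∀ y ∈ Ioo a b, g₁ y = g₂ y := by
    intro y hy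
    have hy2 : g₂ y ∈ Ioo a b := by
      rw [hg2, hg1]
      simp only [Equiv.Perm.mul_apply]
      exact M0' _ (M0' _ (M1' _ (M0 _ (M0 _ (M0 _ hy)))))
    have h3 := hHonA (g₂ y) hy2
    rw [hH] at h3
    simp only [Equiv.Perm.mul_apply] at h3
    rwa [Equiv.Perm.inv_apply_self] at h3
  -- step 4: g₁ commutes with f₀ pointwise on A
  have step4 : ∀ y ∈ Ioo a b, f₀ (g₁ y) = g₁ (f₀ y) := by
    intro y hy
    have h := hgeq y hy
    rw [hg2] at h
    simp only [Equiv.Perm.mul_apply] at h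
    have h2 := congrArg ⇑f₀ h
    rwa [Equiv.Perm.apply_inv_self] at h2
  -- step 5: f₁⁻¹f₀ commutes with f₀ pointwise on A
  have step5 : ∀ z ∈ Ioo a b, f₀ (f₁⁻¹ (f₀ z)) = f₁⁻¹ (f₀ (f₀ z)) := by
    intro z hz
    have hyA : f₀⁻¹ z ∈ Ioo a b := M0' z hz
    have h := step4 (f₀⁻¹ z) hyA
    rw [hg1] at h
    simp only [Equiv.Perm.mul_apply] at h
    rw [Equiv.Perm.apply_inv_self, Equiv.Perm.apply_inv_self] at h
    -- h : f₁⁻¹ (f₀ z) = f₀⁻¹ (f₁⁻¹ (f₀ (f₀ z)))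
    have h2 := congrArg ⇑f₀ h
    rwa [Equiv.Perm.apply_inv_self] at h2
  -- step 6: conclude
  intro x hx
  have hzA : f₀⁻¹ (f₁ x) ∈ Ioo a b := M0' _ (M1 x hx)
  have h := step5 (f₀⁻¹ (f₁ x)) hzA
  rw [Equiv.Perm.apply_inv_self, Equiv.Perm.inv_apply_self] at h
  -- h : f₀ x = f₁⁻¹ (f₀ (f₁ x))
  have h2 := congrArg ⇑f₁ h
  rw [Equiv.Perm.apply_inv_self] at h2
  exact h2.symm
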